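/- Assume α₀ > 0 and set r_n := √n/c_n. If c_n → ∞ as n → ∞, then for every M > 0, P(r_n(α̂_n − α₀) > M) → 0 as n → ∞. -/

import Mathlib

open Filter Topology MeasureTheory ProbabilityTheory

/-- A cumulative distribution function: non-decreasing, right-continuous,
tending to 0 at -∞ and to 1 at +∞. -/
def IsCDF (G : ℝ → ℝ) : Prop :=
  Monotone G ∧ (∀ x : ℝ, ContinuousWithinAt G (Set.Ici x) x) ∧
    Tendsto G atBot (𝓝 0) ∧ Tendsto G atTop (𝓝 1)

/-- The identifiable mixing proportion α₀. -/
noncomputable def alpha0 (F Fb : ℝ → ℝ) : ℝ :=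
  sInf {γ : ℝ | γ ∈ Set.Ioc (0 : ℝ) 1 ∧
    IsCDF (fun x => (F x - (1 - γ) * Fb x) / γ)}

variable {Ω : Type*} [MeasurableSpace Ω]

/-- The empirical CDF of the first n observations X₁(ω), …, Xₙ(ω). -/
noncomputable def empCDF (X : ℕ → Ω → ℝ) (n : ℕ) (ω : Ω) (x : ℝ) : ℝ :=
  (n : ℝ)⁻¹ * ∑ i ∈ Finset.range n, if X i ω ≤ x then (1 : ℝ) else 0

/-- The empirical L₂ distance dₙ(g,h) between two functions, based on the data
X₁(ω), …, Xₙ(ω). -/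
noncomputable def empDist (X : ℕ → Ω → ℝ) (n : ℕ) (ω : Ω) (g h : ℝ → ℝ) : ℝ :=
  Real.sqrt ((n : ℝ)⁻¹ * ∑ i ∈ Finset.range n, (g (X i ω) - h (X i ω)) ^ 2)

/-- The criterion function Cₙ(γ) = γ dₙ(F̂ₛₙᵞ, F̌ₛₙᵞ)
  = inf over CDFs W of dₙ(𝔽ₙ, γW + (1−γ)F_b), with Cₙ(0) = dₙ(𝔽ₙ, F_b). -/
noncomputable def critFn (Fb : ℝ → ℝ) (X : ℕ → Ω → ℝ) (n : ℕ) (γ : ℝ) (ω : Ω) : ℝ :=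
  if γ = 0 then empDist X n ω (empCDF X n ω) Fb
  else sInf {v : ℝ | ∃ W : ℝ → ℝ, IsCDF W ∧
    v = empDist X n ω (empCDF X n ω) (fun x => γ * W x + (1 - γ) * Fb x)}

/-- The estimator α̂ₙ = inf{γ ∈ [0,1] : √n Cₙ(γ) ≤ cₙ}. -/
noncomputable def hatAlpha (Fb : ℝ → ℝ) (X : ℕ → Ω → ℝ) (cn : ℝ) (n : ℕ) (ω : Ω) : ℝ :=
  sInf {γ : ℝ | γ ∈ Set.Icc (0 : ℝ) 1 ∧ Real.sqrt n * critFn Fb X n γ ω ≤ cn}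

/-! ### Auxiliary material -/

/-- The centered indicator kernel `g(x,y) = 1{x ≤ y} - F(y)`. -/
noncomputable def gker (F : ℝ → ℝ) (x y : ℝ) : ℝ := (if x ≤ y then (1 : ℝ) else 0) - F y

lemma isCDF_nonneg {G : ℝ → ℝ} (hG : IsCDF G) (x : ℝ) : 0 ≤ G x :=
  le_of_tendsto hG.2.2.1 (eventually_atBot.2 ⟨x, fun _ hy => hG.1 hy⟩)

lemma isCDF_le_one {G : ℝ → ℝ} (hG : IsCDF G) (x : ℝ) : G x ≤ 1 :=
  ge_of_tendsto hG.2.2.2 (eventually_atTop.2 ⟨x, fun _ hy => hG.1 hy⟩)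

lemma gker_meas {F : ℝ → ℝ} (hF : Measurable F) :
    Measurable (fun p : ℝ × ℝ => gker F p.1 p.2) := by
  unfold gker
  exact (Measurable.ite (measurableSet_le measurable_fst measurable_snd)
    measurable_const measurable_const).sub (hF.comp measurable_snd)

lemma gker_abs_le {F : ℝ → ℝ} (hF : ∀ y, 0 ≤ F y ∧ F y ≤ 1) (x y : ℝ) : |gker F x y| ≤ 1 := by
  obtain ⟨h0, h1⟩ := hF y
  unfold gker
  split <;> rw [abs_le] <;> constructor <;> linarith

section Aux

variable {P : Measure Ω} [IsProbabilityMeasure P] {F : ℝ → ℝ} {X : ℕ → Ω → ℝ}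

lemma gg_meas (hF : Measurable F) (hX : ∀ i, Measurable (X i)) (i j k : ℕ) :
    Measurable (fun ω => gker F (X j ω) (X i ω) * gker F (X k ω) (X i ω)) :=
  ((gker_meas hF).comp ((hX j).prodMk (hX i))).mul
    ((gker_meas hF).comp ((hX k).prodMk (hX i)))

lemma gg_integrable (hF : Measurable F) (hF01 : ∀ y, 0 ≤ F y ∧ F y ≤ 1)
    (hX : ∀ i, Measurable (X i)) (i j k : ℕ) :
    Integrable (fun ω => gker F (X j ω) (X i ω) * gker F (X k ω) (X i ω)) P :=
  ⟨(gg_meas hF hX i j k).aestronglyMeasurable,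
    HasFiniteIntegral.of_bounded (C := 1) (ae_of_all _ fun ω => by
      rw [Real.norm_eq_abs, abs_mul]
      exact mul_le_one₀ (gker_abs_le hF01 _ _) (abs_nonneg _) (gker_abs_le hF01 _ _))⟩

lemma gg_abs_integral_le (hF : Measurable F) (hF01 : ∀ y, 0 ≤ F y ∧ F y ≤ 1)
    (hX : ∀ i, Measurable (X i)) (i j k : ℕ) :
    |∫ ω, gker F (X j ω) (X i ω) * gker F (X k ω) (X i ω) ∂P| ≤ 1 := by
  rw [← Real.norm_eq_abs]
  calc ‖∫ ω, gker F (X j ω) (X i ω) * gker F (X k ω) (X i ω) ∂P‖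
      ≤ 1 * (P Set.univ).toReal := norm_integral_le_of_norm_le_const (ae_of_all _ fun ω => by
        rw [Real.norm_eq_abs, abs_mul]
        exact mul_le_one₀ (gker_abs_le hF01 _ _) (abs_nonneg _) (gker_abs_le hF01 _ _))
    _ = 1 := by simp

lemma gg_integral_zero (hF : Measurable F) (hF01 : ∀ y, 0 ≤ F y ∧ F y ≤ 1)
    (hX : ∀ i, Measurable (X i))
    (hindep : iIndepFun X P)
    (hdist : ∀ i, ∀ x : ℝ, (P {ω | X i ω ≤ x}).toReal = F x)
    {i j k : ℕ} (hji : j ≠ i) (hjk : j ≠ k) :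
    ∫ ω, gker F (X j ω) (X i ω) * gker F (X k ω) (X i ω) ∂P = 0 := by
  set Z : Ω → ℝ × ℝ := fun ω => (X k ω, X i ω) with hZdef
  have hZm : Measurable Z := (hX k).prodMk (hX i)
  have hindepZ : IndepFun Z (X j) P := hindep.indepFun_prodMk hX k i j hjk.symm hji.symm
  have hmapeq : P.map (fun ω => (Z ω, X j ω)) = (P.map Z).prod (P.map (X j)) :=
    (indepFun_iff_map_prod_eq_prod_map_map hZm.aemeasurable (hX j).aemeasurable).mp hindepZ
  set H : (ℝ × ℝ) × ℝ → ℝ := fun p => gker F p.2 p.1.2 * gker F p.1.1 p.1.2 with hHdef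
  have hHm : Measurable H :=
    ((gker_meas hF).comp (measurable_snd.prodMk measurable_fst.snd)).mul
      ((gker_meas hF).comp (measurable_fst.fst.prodMk measurable_fst.snd))
  haveI : IsProbabilityMeasure (P.map Z) := Measure.isProbabilityMeasure_map hZm.aemeasurable
  haveI : IsProbabilityMeasure (P.map (X j)) := Measure.isProbabilityMeasure_map (hX j).aemeasurable
  have hHint : Integrable H ((P.map Z).prod (P.map (X j))) :=
    ⟨hHm.aestronglyMeasurable, HasFiniteIntegral.of_bounded (C := 1) (ae_of_all _ fun p => by
      rw [Real.norm_eq_abs, hHdef, abs_mul]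
      exact mul_le_one₀ (gker_abs_le hF01 _ _) (abs_nonneg _) (gker_abs_le hF01 _ _))⟩
  have hinner : ∀ y : ℝ, ∫ x, gker F x y ∂(P.map (X j)) = 0 := by
    intro y
    have heq : (fun x : ℝ => gker F x y)
        = fun x => Set.indicator (Set.Iic y) (fun _ => (1 : ℝ)) x - F y := by
      funext x; simp [gker, Set.indicator_apply, Set.mem_Iic]
    rw [heq, integral_sub ((integrable_const (1 : ℝ)).indicator measurableSet_Iic)
      (integrable_const _), integral_indicator_const _ measurableSet_Iic, integral_const,
      Measure.real_def, Measure.map_apply (hX j) measurableSet_Iic]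
    have hpre : (X j ⁻¹' Set.Iic y) = {ω | X j ω ≤ y} := rfl
    rw [hpre, hdist j y]
    simp
  calc ∫ ω, gker F (X j ω) (X i ω) * gker F (X k ω) (X i ω) ∂P
      = ∫ ω, H (Z ω, X j ω) ∂P := rfl
    _ = ∫ p, H p ∂(P.map (fun ω => (Z ω, X j ω))) :=
        (integral_map (hZm.prodMk (hX j)).aemeasurable hHm.aestronglyMeasurable).symm
    _ = ∫ p, H p ∂((P.map Z).prod (P.map (X j))) := by rw [hmapeq]
    _ = ∫ z, ∫ x, H (z, x) ∂(P.map (X j)) ∂(P.map Z) := integral_prod H hHint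
    _ = 0 := by
        have hz : ∀ z : ℝ × ℝ, ∫ x, H (z, x) ∂(P.map (X j)) = 0 := by
          intro z
          simp only [hHdef]
          rw [integral_mul_const, hinner, zero_mul]
        simp only [hz, integral_zero]

/-- The key second-moment bound: `E[∑ᵢ (𝔽ₙ(Xᵢ) − F(Xᵢ))²] ≤ 3`. -/
lemma exp_bound (hF : Measurable F) (hF01 : ∀ y, 0 ≤ F y ∧ F y ≤ 1)
    (hX : ∀ i, Measurable (X i))
    (hindep : iIndepFun X P)
    (hdist : ∀ i, ∀ x : ℝ, (P {ω | X i ω ≤ x}).toReal = F x) (n : ℕ) :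
    Integrable (fun ω => ∑ i ∈ Finset.range n,
        ((n : ℝ)⁻¹ * ∑ j ∈ Finset.range n, gker F (X j ω) (X i ω)) ^ 2) P ∧
    ∫ ω, (∑ i ∈ Finset.range n,
        ((n : ℝ)⁻¹ * ∑ j ∈ Finset.range n, gker F (X j ω) (X i ω)) ^ 2) ∂P ≤ 3 := by
  have hrw : (fun ω => ∑ i ∈ Finset.range n,
        ((n : ℝ)⁻¹ * ∑ j ∈ Finset.range n, gker F (X j ω) (X i ω)) ^ 2)
      = fun ω => ∑ i ∈ Finset.range n, ∑ j ∈ Finset.range n, ∑ k ∈ Finset.range n,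
          ((n : ℝ)⁻¹) ^ 2 * (gker F (X j ω) (X i ω) * gker F (X k ω) (X i ω)) := by
    funext ω
    refine Finset.sum_congr rfl fun i _ => ?_
    rw [mul_pow, sq (∑ j ∈ Finset.range n, gker F (X j ω) (X i ω)),
      Finset.sum_mul_sum, Finset.mul_sum]
    exact Finset.sum_congr rfl fun j _ => by rw [Finset.mul_sum]
  have hint : ∀ i j k : ℕ, Integrable
      (fun ω => ((n : ℝ)⁻¹) ^ 2 * (gker F (X j ω) (X i ω) * gker F (X k ω) (X i ω))) P :=
    fun i j k => (gg_integrable hF hF01 hX i j k).const_mul _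
  constructor
  · rw [hrw]
    exact integrable_finset_sum _ fun i _ => integrable_finset_sum _ fun j _ =>
      integrable_finset_sum _ fun k _ => hint i j k
  · rw [hrw]
    rw [integral_finset_sum _ fun i _ => integrable_finset_sum _ fun j _ =>
      integrable_finset_sum _ fun k _ => hint i j k]
    have hsplit : ∀ i ∈ Finset.range n,
        (∫ ω, (∑ j ∈ Finset.range n, ∑ k ∈ Finset.range n,
          ((n : ℝ)⁻¹) ^ 2 * (gker F (X j ω) (X i ω) * gker F (X k ω) (X i ω))) ∂P)
        = ∑ j ∈ Finset.range n, ∑ k ∈ Finset.range n,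
            ((n : ℝ)⁻¹) ^ 2 * ∫ ω, gker F (X j ω) (X i ω) * gker F (X k ω) (X i ω) ∂P := by
      intro i _
      rw [integral_finset_sum _ fun j _ => integrable_finset_sum _ fun k _ => hint i j k]
      refine Finset.sum_congr rfl fun j _ => ?_
      rw [integral_finset_sum _ fun k _ => hint i j k]
      exact Finset.sum_congr rfl fun k _ => integral_const_mul _ _
    rw [Finset.sum_congr rfl hsplit]
    have hbound : ∀ i ∈ Finset.range n, ∀ j ∈ Finset.range n, ∀ k ∈ Finset.range n,
        ((n : ℝ)⁻¹) ^ 2 * ∫ ω, gker F (X j ω) (X i ω) * gker F (X k ω) (X i ω) ∂P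
        ≤ ((n : ℝ)⁻¹) ^ 2 * ((if j = i then (1 : ℝ) else 0) + (if k = j then (1 : ℝ) else 0)) := by
      intro i _ j _ k _
      refine mul_le_mul_of_nonneg_left ?_ (sq_nonneg _)
      by_cases hji : j = i
      · have h1 := gg_abs_integral_le (P := P) hF hF01 hX i j k
        have h2 : (0 : ℝ) ≤ (if k = j then (1 : ℝ) else 0) := by positivity
        rw [if_pos hji]
        nlinarith [abs_nonneg (∫ ω, gker F (X j ω) (X i ω) * gker F (X k ω) (X i ω) ∂P),
          le_abs_self (∫ ω, gker F (X j ω) (X i ω) * gker F (X k ω) (X i ω) ∂P)]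
      · by_cases hjk : j = k
        · have h1 := gg_abs_integral_le (P := P) hF hF01 hX i j k
          rw [if_neg hji, if_pos (hjk.symm)]
          nlinarith [le_abs_self (∫ ω, gker F (X j ω) (X i ω) * gker F (X k ω) (X i ω) ∂P)]
        · rw [gg_integral_zero hF hF01 hX hindep hdist hji hjk, if_neg hji,
            if_neg (fun h => hjk h.symm)]
          simp
    calc (∑ i ∈ Finset.range n, ∑ j ∈ Finset.range n, ∑ k ∈ Finset.range n,
          ((n : ℝ)⁻¹) ^ 2 * ∫ ω, gker F (X j ω) (X i ω) * gker F (X k ω) (X i ω) ∂P)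
        ≤ ∑ i ∈ Finset.range n, ∑ j ∈ Finset.range n, ∑ k ∈ Finset.range n,
          ((n : ℝ)⁻¹) ^ 2 * ((if j = i then (1 : ℝ) else 0) + (if k = j then (1 : ℝ) else 0)) := by
          refine Finset.sum_le_sum fun i hi => Finset.sum_le_sum fun j hj =>
            Finset.sum_le_sum fun k hk => hbound i hi j hj k hk
      _ ≤ 3 := by
          by_cases hn : n = 0
          · simp [hn]
          have hn' : (0 : ℝ) < n := by exact_mod_cast Nat.pos_of_ne_zero hn
          have hcalc : ∀ i ∈ Finset.range n, ∀ j ∈ Finset.range n,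
              (∑ k ∈ Finset.range n,
                ((n : ℝ)⁻¹) ^ 2 * ((if j = i then (1 : ℝ) else 0) + (if k = j then (1 : ℝ) else 0)))
              = (n : ℝ) * (((n : ℝ)⁻¹) ^ 2 * (if j = i then (1 : ℝ) else 0)) + ((n : ℝ)⁻¹) ^ 2 := by
            intro i _ j hj
            simp only [mul_add, Finset.sum_add_distrib, Finset.sum_const, Finset.card_range,
              nsmul_eq_mul]
            congr 1
            rw [← Finset.mul_sum, Finset.sum_ite_eq' (Finset.range n) j (fun _ => (1 : ℝ)),
              if_pos hj, mul_one]
          calc (∑ i ∈ Finset.range n, ∑ j ∈ Finset.range n, ∑ k ∈ Finset.range n,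
                ((n : ℝ)⁻¹) ^ 2 * ((if j = i then (1 : ℝ) else 0) + (if k = j then (1 : ℝ) else 0)))
              = ∑ i ∈ Finset.range n, ∑ j ∈ Finset.range n,
                ((n : ℝ) * (((n : ℝ)⁻¹) ^ 2 * (if j = i then (1 : ℝ) else 0)) + ((n : ℝ)⁻¹) ^ 2) := by
                exact Finset.sum_congr rfl fun i hi => Finset.sum_congr rfl fun j hj =>
                  hcalc i hi j hj
            _ = 2 := by
                simp only [Finset.sum_add_distrib, Finset.sum_const, Finset.card_range,
                  nsmul_eq_mul, ← Finset.mul_sum]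
                have : ∀ i ∈ Finset.range n,
                    (∑ j ∈ Finset.range n, (if j = i then (1 : ℝ) else 0)) = 1 := by
                  intro i hi
                  rw [Finset.sum_ite_eq' (Finset.range n) i (fun _ => (1 : ℝ)), if_pos hi]
                rw [Finset.sum_congr rfl fun i hi => by rw [this i hi]]
                simp only [Finset.sum_const, Finset.card_range, nsmul_eq_mul]
                field_simp
                ring
            _ ≤ 3 := by norm_num

end Aux

/-- Lemma 10: if α₀ > 0 and cₙ → ∞, then with rₙ = √n/cₙ, for every M > 0,
P(rₙ(α̂ₙ − α₀) > M) → 0. -/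
theorem hatAlpha_right_tail
    (P : Measure Ω) [IsProbabilityMeasure P]
    (Fs Fb : ℝ → ℝ) (hFs : IsCDF Fs) (hFb : IsCDF Fb) (hne : Fs ≠ Fb)
    (α : ℝ) (hα : α ∈ Set.Ioc (0 : ℝ) 1)
    (F : ℝ → ℝ) (hF : F = fun x => α * Fs x + (1 - α) * Fb x)
    (X : ℕ → Ω → ℝ) (hmeas : ∀ i, Measurable (X i))
    (hindep : iIndepFun X P)
    (hdist : ∀ i, ∀ x : ℝ, (P {ω | X i ω ≤ x}).toReal = F x)
    (halpha0_pos : 0 < alpha0 F Fb)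
    (c : ℕ → ℝ) (hc_pos : ∀ n, 0 < c n)
    (hc_infty : Tendsto c atTop atTop)
    (r : ℕ → ℝ) (hr : r = fun n : ℕ => Real.sqrt n / c n) :
    ∀ M : ℝ, 0 < M →
      Tendsto
        (fun n => P {ω | M < r n * (hatAlpha Fb X (c n) n ω - alpha0 F Fb)})
        atTop (𝓝 0) := by
  intro M hM
  -- basic facts about F
  have hF01 : ∀ y, 0 ≤ F y ∧ F y ≤ 1 := by
    intro y
    have h1 := isCDF_nonneg hFs y; have h2 := isCDF_le_one hFs y
    have h3 := isCDF_nonneg hFb y; have h4 := isCDF_le_one hFb y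
    simp only [hF]
    constructor <;> nlinarith [hα.1, hα.2]
  have hFmeas : Measurable F := by
    rw [hF]
    exact (measurable_const.mul hFs.1.measurable).add (measurable_const.mul hFb.1.measurable)
  -- the quadratic statistic Y
  set Y : ℕ → Ω → ℝ := fun n ω => ∑ i ∈ Finset.range n,
    ((n : ℝ)⁻¹ * ∑ j ∈ Finset.range n, gker F (X j ω) (X i ω)) ^ 2 with hYdef
  have hdiff : ∀ (n : ℕ), n ≠ 0 → ∀ (ω : Ω) (x : ℝ),
      empCDF X n ω x - F x = (n : ℝ)⁻¹ * ∑ j ∈ Finset.range n, gker F (X j ω) x := by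
    intro n hn ω x
    have hn' : (n : ℝ) ≠ 0 := Nat.cast_ne_zero.mpr hn
    simp only [empCDF, gker, Finset.sum_sub_distrib, Finset.sum_const, Finset.card_range,
      nsmul_eq_mul, mul_sub]
    rw [← mul_assoc, inv_mul_cancel₀ hn', one_mul]
  have hYalt : ∀ (n : ℕ), n ≠ 0 → ∀ ω : Ω,
      Y n ω = ∑ i ∈ Finset.range n, (empCDF X n ω (X i ω) - F (X i ω)) ^ 2 := by
    intro n hn ω
    exact (Finset.sum_congr rfl fun i _ => by rw [hdiff n hn ω (X i ω)]).symm
  -- nonemptiness of the set defining α₀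
  have hA_ne : {γ : ℝ | γ ∈ Set.Ioc (0 : ℝ) 1 ∧
      IsCDF (fun x => (F x - (1 - γ) * Fb x) / γ)}.Nonempty := by
    by_contra h
    rw [Set.not_nonempty_iff_eq_empty] at h
    rw [alpha0, h, Real.sInf_empty] at halpha0_pos
    exact lt_irrefl _ halpha0_pos
  -- deterministic inclusion of events
  have hsubset : ∀ n : ℕ, n ≠ 0 →
      {ω | M < r n * (hatAlpha Fb X (c n) n ω - alpha0 F Fb)} ⊆ {ω | (c n) ^ 2 ≤ Y n ω} := by
    intro n hn ω hω
    simp only [Set.mem_setOf_eq] at hω ⊢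
    by_contra hY
    push_neg at hY
    have hn' : (0 : ℝ) < n := by exact_mod_cast Nat.pos_of_ne_zero hn
    have hrpos : 0 < r n := by
      rw [hr]; exact div_pos (Real.sqrt_pos.mpr hn') (hc_pos n)
    have hε : 0 < M / r n := div_pos hM hrpos
    obtain ⟨γ, hγA, hγlt⟩ := Real.lt_sInf_add_pos hA_ne hε
    obtain ⟨hγIoc, hγCDF⟩ := hγA
    have hγ0 : (0 : ℝ) < γ := hγIoc.1
    have hWF : (fun x => γ * ((F x - (1 - γ) * Fb x) / γ) + (1 - γ) * Fb x) = F := by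
      funext x; field_simp; ring
    set s : ℝ := (n : ℝ)⁻¹ * ∑ i ∈ Finset.range n, (empCDF X n ω (X i ω) - F (X i ω)) ^ 2
      with hs
    have hs_nonneg : 0 ≤ s :=
      mul_nonneg (inv_nonneg.mpr hn'.le) (Finset.sum_nonneg fun i _ => sq_nonneg _)
    have hsd : Real.sqrt n * Real.sqrt s ≤ c n := by
      by_contra hlt
      push_neg at hlt
      have h2 : (c n) ^ 2 < (Real.sqrt n * Real.sqrt s) ^ 2 :=
        pow_lt_pow_left₀ hlt (hc_pos n).le (by norm_num)
      rw [mul_pow, Real.sq_sqrt hn'.le, Real.sq_sqrt hs_nonneg] at h2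
      have hns : (n : ℝ) * s = Y n ω := by
        rw [hs, ← mul_assoc, mul_inv_cancel₀ hn'.ne', one_mul, hYalt n hn ω]
      linarith
    have hcrit : critFn Fb X n γ ω ≤ Real.sqrt s := by
      rw [critFn, if_neg hγ0.ne']
      refine csInf_le ⟨0, fun v hv => ?_⟩
        ⟨fun x => (F x - (1 - γ) * Fb x) / γ, hγCDF, by rw [hWF]; rfl⟩
      obtain ⟨W, _, rfl⟩ := hv
      exact Real.sqrt_nonneg _
    have hγmem : γ ∈ {γ : ℝ | γ ∈ Set.Icc (0 : ℝ) 1 ∧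
        Real.sqrt n * critFn Fb X n γ ω ≤ c n} := by
      refine ⟨⟨hγ0.le, hγIoc.2⟩, ?_⟩
      calc Real.sqrt n * critFn Fb X n γ ω ≤ Real.sqrt n * Real.sqrt s :=
            mul_le_mul_of_nonneg_left hcrit (Real.sqrt_nonneg _)
        _ ≤ c n := hsd
    have hhat : hatAlpha Fb X (c n) n ω ≤ γ :=
      csInf_le ⟨0, fun x hx => hx.1.1⟩ hγmem
    have hlt2 : r n * (hatAlpha Fb X (c n) n ω - alpha0 F Fb) < M := by
      have h4 : hatAlpha Fb X (c n) n ω - alpha0 F Fb < M / r n := by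
        rw [alpha0]
        linarith
      calc r n * (hatAlpha Fb X (c n) n ω - alpha0 F Fb) < r n * (M / r n) :=
            mul_lt_mul_of_pos_left h4 hrpos
        _ = M := by field_simp
    linarith
  -- Markov's inequality
  have hmarkov : ∀ n : ℕ, P {ω | (c n) ^ 2 ≤ Y n ω} ≤ ENNReal.ofReal (3 / (c n) ^ 2) := by
    intro n
    have hc2 : (0 : ℝ) < (c n) ^ 2 := pow_pos (hc_pos n) 2
    obtain ⟨hYint, hY3⟩ := exp_bound (P := P) hFmeas hF01 hmeas hindep hdist n
    have hYm : Measurable (Y n) := by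
      refine Finset.measurable_sum _ fun i _ => Measurable.pow_const ?_ 2
      exact measurable_const.mul (Finset.measurable_sum _ fun j _ =>
        (gker_meas hFmeas).comp ((hmeas j).prodMk (hmeas i)))
    have hYnn : ∀ ω, 0 ≤ Y n ω := fun ω => Finset.sum_nonneg fun i _ => sq_nonneg _
    have h1 : {ω | (c n) ^ 2 ≤ Y n ω} ⊆ {ω | ENNReal.ofReal ((c n) ^ 2)
        ≤ ENNReal.ofReal (Y n ω)} := fun ω hω => ENNReal.ofReal_le_ofReal hω
    calc P {ω | (c n) ^ 2 ≤ Y n ω}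
        ≤ P {ω | ENNReal.ofReal ((c n) ^ 2) ≤ ENNReal.ofReal (Y n ω)} := measure_mono h1
      _ ≤ (∫⁻ ω, ENNReal.ofReal (Y n ω) ∂P) / ENNReal.ofReal ((c n) ^ 2) :=
          meas_ge_le_lintegral_div hYm.ennreal_ofReal.aemeasurable
            (ENNReal.ofReal_pos.mpr hc2).ne' ENNReal.ofReal_ne_top
      _ ≤ ENNReal.ofReal 3 / ENNReal.ofReal ((c n) ^ 2) := by
          gcongr
          rw [← ofReal_integral_eq_lintegral_ofReal hYint (ae_of_all _ hYnn)]
          exact ENNReal.ofReal_le_ofReal hY3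
      _ = ENNReal.ofReal (3 / (c n) ^ 2) := (ENNReal.ofReal_div_of_pos hc2).symm
  -- conclusion
  have hlim : Tendsto (fun n => ENNReal.ofReal (3 / (c n) ^ 2)) atTop (𝓝 0) := by
    have h2 : Tendsto (fun n => (c n) ^ 2) atTop atTop := by
      have := hc_infty.atTop_mul_atTop₀ hc_infty
      simpa [sq] using this
    have h3 : Tendsto (fun n => 3 / (c n) ^ 2) atTop (𝓝 0) :=
      tendsto_const_nhds.div_atTop h2
    have := ENNReal.tendsto_ofReal h3
    simpa using this
  refine tendsto_of_tendsto_of_tendsto_of_le_of_le' tendsto_const_nhds hlim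
    (Eventually.of_forall fun n => zero_le) ?_
  filter_upwards [eventually_ne_atTop 0] with n hn
  exact le_trans (measure_mono (hsubset n hn)) (hmarkov n)
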